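/- Let n ≥ 2 be an integer and let s_1,…,s_{n−1}, z_1,…,z_{n−2}, a_1 be complex numbers. Set s_0 = s_n = 0 and, for 1 ≤ k ≤ n−1, define m_k = 1/((s_{k−1}−s_k−a_1)(s_k−s_{k+1}−a_1)). For μ = (μ_1,…,μ_{n−1}) ∈ U_{n−1} define G(μ) = Γ(s_1+μ_1+a_1)·Γ(s_{n−1}+μ_{n−1}−a_1)·Π_{j=1}^{n−2} Γ(z_j+s_j+μ_j)·Γ(z_j+s_{j+1}+μ_{j+1}+a_1). Assume s_{k−1}−s_k−a_1 ≠ 0 for all 1 ≤ k ≤ n, and that none of the complex numbers s_1+a_1, s_{n−1}−a_1, z_j+s_j, z_j+s_{j+1}+a_1 (for 1 ≤ j ≤ n−2) is a nonpositive integer. Then Σ_{μ ∈ U_{n−1}} (Π_{k ∈ I_μ} m_k)·G(μ) = 0. (This is the pointwise, integrand form of the recurrence relation Σ_{μ∈U_{n−1}} (Π_{k∈I_μ} m_k)·T_{n,a}(s+μ) = 0 for the Mellin transform of the GL(n,ℝ) Whittaker function.) -/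

import Mathlib

open Finset

/-- `U_m`: binary tuples (as Boolean tuples) of length `m` with no two adjacent 1's. -/
def NoTwoAdjOnes {m : ℕ} (μ : Fin m → Bool) : Prop :=
  ∀ i j : Fin m, (j : ℕ) = (i : ℕ) + 1 → ¬(μ i = true ∧ μ j = true)

instance {m : ℕ} : DecidablePred (NoTwoAdjOnes (m := m)) := fun _ => by
  unfold NoTwoAdjOnes; infer_instance

/-- The `k`-th entry (1-indexed, `1 ≤ k ≤ m`) of a Boolean tuple `μ : Fin m → Bool`,
viewed as the complex number `0` or `1`. -/
noncomputable def muC {m : ℕ} (μ : Fin m → Bool) (k : ℕ) : ℂ :=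
  if h : k - 1 < m then (if μ ⟨k - 1, h⟩ then 1 else 0) else 0

/-! ### Auxiliary machinery -/

noncomputable def Tsum (c : ℕ → ℂ) (m : ℕ) : ℂ :=
  ∑ μ : Fin m → Bool, if NoTwoAdjOnes μ then
    ∏ i : Fin m, (if μ i = true then c ((i : ℕ) + 1) else 1) else 0

lemma sum_snoc {l : ℕ} (F : (Fin (l + 1) → Bool) → ℂ) :
    ∑ μ : Fin (l + 1) → Bool, F μ
      = ∑ f : Fin l → Bool,
          (F (Fin.snoc f false : Fin (l + 1) → Bool)
            + F (Fin.snoc f true : Fin (l + 1) → Bool)) := by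
  rw [← Equiv.sum_comp (Fin.snocEquiv (fun _ => Bool)) F, Fintype.sum_prod_type_right]
  simp [Fin.snocEquiv, Fintype.sum_bool, add_comm]

lemma prod_snoc {l : ℕ} (c : ℕ → ℂ) (f : Fin l → Bool) (b : Bool) :
    (∏ i : Fin (l + 1),
        (if (Fin.snoc f b : Fin (l + 1) → Bool) i = true then c ((i : ℕ) + 1) else 1))
      = (∏ i : Fin l, (if f i = true then c ((i : ℕ) + 1) else 1))
          * (if b then c (l + 1) else 1) := by
  rw [Fin.prod_univ_castSucc]
  simp [Fin.snoc_castSucc, Fin.snoc_last]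

lemma snoc_lt {l : ℕ} (f : Fin l → Bool) (b : Bool) (i : Fin (l + 1)) (h : (i : ℕ) < l) :
    (Fin.snoc f b : Fin (l + 1) → Bool) i = f ⟨(i : ℕ), h⟩ := by
  conv_lhs => rw [show i = Fin.castSucc ⟨(i : ℕ), h⟩ from Fin.ext rfl]
  rw [Fin.snoc_castSucc]

lemma noTwoAdj_snoc_false {l : ℕ} (f : Fin l → Bool) :
    NoTwoAdjOnes (Fin.snoc f false : Fin (l + 1) → Bool) ↔ NoTwoAdjOnes f := by
  constructor
  · intro h i j hij
    have := h i.castSucc j.castSucc (by simpa using hij)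
    simpa [Fin.snoc_castSucc] using this
  · intro h i j hij hc
    have hjl : (j : ℕ) < l := by
      rcases lt_or_eq_of_le (Nat.lt_succ_iff.mp j.isLt) with h' | h'
      · exact h'
      · exfalso
        have hj : (Fin.snoc f false : Fin (l + 1) → Bool) j = false := by
          have : j = Fin.last l := Fin.ext h'
          rw [this, Fin.snoc_last]
        rw [hj] at hc; exact Bool.false_ne_true hc.2
    have hil : (i : ℕ) < l := lt_of_le_of_lt (by omega) hjl
    have hi : (Fin.snoc f false : _ → Bool) i = f ⟨(i : ℕ), hil⟩ := snoc_lt f false i hil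
    have hj : (Fin.snoc f false : _ → Bool) j = f ⟨(j : ℕ), hjl⟩ := snoc_lt f false j hjl
    exact h ⟨i, hil⟩ ⟨j, hjl⟩ hij ⟨by rw [← hi]; exact hc.1, by rw [← hj]; exact hc.2⟩

lemma noTwoAdj_snoc_true {l : ℕ} (f : Fin (l + 1) → Bool) :
    NoTwoAdjOnes (Fin.snoc f true : Fin (l + 2) → Bool)
      ↔ NoTwoAdjOnes f ∧ f (Fin.last l) = false := by
  constructor
  · intro h
    refine ⟨?_, ?_⟩
    · intro i j hij
      have := h i.castSucc j.castSucc (by simpa using hij)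
      simpa [Fin.snoc_castSucc] using this
    · by_contra hb
      have hb' : f (Fin.last l) = true := by
        cases hfl : f (Fin.last l) with
        | false => exact absurd hfl hb
        | true => rfl
      have := h (Fin.last l).castSucc (Fin.last (l + 1)) (by simp)
      exact this ⟨by simpa [Fin.snoc_castSucc] using hb', by simp [Fin.snoc_last]⟩
  · rintro ⟨h, hl⟩ i j hij hc
    rcases lt_or_eq_of_le (Nat.lt_succ_iff.mp j.isLt) with hjl | hjl
    · have hil : (i : ℕ) < l + 1 := lt_of_le_of_lt (by omega) hjl
      have hi : (Fin.snoc f true : _ → Bool) i = f ⟨(i : ℕ), hil⟩ := snoc_lt f true i hil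
      have hj : (Fin.snoc f true : _ → Bool) j = f ⟨(j : ℕ), hjl⟩ := snoc_lt f true j hjl
      exact h ⟨i, hil⟩ ⟨j, hjl⟩ hij ⟨by rw [← hi]; exact hc.1, by rw [← hj]; exact hc.2⟩
    · have hil : (i : ℕ) < l + 1 := by omega
      have hi : (Fin.snoc f true : _ → Bool) i = f ⟨(i : ℕ), hil⟩ := snoc_lt f true i hil
      have hieq : (⟨(i : ℕ), hil⟩ : Fin (l + 1)) = Fin.last l := Fin.ext (by simp; omega)
      rw [hi, hieq, hl] at hc
      exact Bool.false_ne_true hc.1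

lemma Tsum_zero (c : ℕ → ℂ) : Tsum c 0 = 1 := by
  have h : ∀ μ : Fin 0 → Bool, NoTwoAdjOnes μ := fun μ i => i.elim0
  simp [Tsum, h]

lemma Tsum_one (c : ℕ → ℂ) : Tsum c 1 = 1 + c 1 := by
  have h : ∀ μ : Fin 1 → Bool, NoTwoAdjOnes μ := by
    intro μ i j hij
    have : (j : ℕ) < 1 := j.isLt
    omega
  rw [Tsum]
  rw [← Equiv.sum_comp (Equiv.funUnique (Fin 1) Bool).symm]
  simp [h, Fintype.sum_bool, add_comm]

lemma Tsum_rec (c : ℕ → ℂ) (m : ℕ) :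
    Tsum c (m + 2) = Tsum c (m + 1) + c (m + 2) * Tsum c m := by
  have e1 : ∀ f : Fin (m + 1) → Bool,
      (if NoTwoAdjOnes (Fin.snoc f false : Fin (m + 2) → Bool) then
        ∏ i : Fin (m + 2),
          (if (Fin.snoc f false : Fin (m + 2) → Bool) i = true then c ((i : ℕ) + 1) else 1)
      else 0)
      = (if NoTwoAdjOnes f then
          ∏ i : Fin (m + 1), (if f i = true then c ((i : ℕ) + 1) else 1) else 0) := by
    intro f
    by_cases h : NoTwoAdjOnes f
    · rw [if_pos ((noTwoAdj_snoc_false f).mpr h), if_pos h, prod_snoc]; simp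
    · rw [if_neg (fun hh => h ((noTwoAdj_snoc_false f).mp hh)), if_neg h]
  have e2 : ∀ f : Fin (m + 1) → Bool,
      (if NoTwoAdjOnes (Fin.snoc f true : Fin (m + 2) → Bool) then
        ∏ i : Fin (m + 2),
          (if (Fin.snoc f true : Fin (m + 2) → Bool) i = true then c ((i : ℕ) + 1) else 1)
      else 0)
      = (if NoTwoAdjOnes f ∧ f (Fin.last m) = false then
          (∏ i : Fin (m + 1), (if f i = true then c ((i : ℕ) + 1) else 1)) * c (m + 2)
        else 0) := by
    intro f
    by_cases h : NoTwoAdjOnes f ∧ f (Fin.last m) = false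
    · rw [if_pos ((noTwoAdj_snoc_true f).mpr h), if_pos h, prod_snoc]; simp
    · rw [if_neg (fun hh => h ((noTwoAdj_snoc_true f).mp hh)), if_neg h]
  have e3 : (∑ f : Fin (m + 1) → Bool,
      (if NoTwoAdjOnes f ∧ f (Fin.last m) = false then
        (∏ i : Fin (m + 1), (if f i = true then c ((i : ℕ) + 1) else 1)) * c (m + 2)
      else 0)) = c (m + 2) * Tsum c m := by
    rw [sum_snoc, Tsum, Finset.mul_sum]
    apply Finset.sum_congr rfl
    intro g _
    simp only [Fin.snoc_last]
    have hneg : ¬(NoTwoAdjOnes (Fin.snoc g true : Fin (m + 1) → Bool) ∧ (true : Bool) = false) := by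
      simp
    rw [if_neg hneg, add_zero]
    by_cases h : NoTwoAdjOnes g
    · rw [if_pos ⟨(noTwoAdj_snoc_false g).mpr h, by simp⟩, if_pos h, prod_snoc]
      simp [mul_comm]
    · rw [if_neg (fun hh => h ((noTwoAdj_snoc_false g).mp hh.1)), if_neg h, mul_zero]
  rw [Tsum, sum_snoc, Finset.sum_add_distrib]
  rw [Finset.sum_congr rfl (fun f _ => e1 f), Finset.sum_congr rfl (fun f _ => e2 f), e3]
  rfl

lemma alg (b B : ℕ → ℂ) (hb : ∀ k, 1 ≤ k → b k ≠ 0) (hB0 : B 0 = 0) :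
    ∀ m : ℕ,
      Tsum (fun k => (B (k - 1) - b k) * B k / (b k * b (k + 1))) m
          * ∏ k ∈ Icc 1 m, b (k + 1)
        = ∏ k ∈ Icc 1 m, (b (k + 1) - B k) := by
  set c : ℕ → ℂ := fun k => (B (k - 1) - b k) * B k / (b k * b (k + 1)) with hc
  intro m
  induction m using Nat.twoStepInduction with
  | zero => simp [Tsum_zero]
  | one =>
    rw [Tsum_one]
    simp only [Finset.Icc_self, Finset.prod_singleton]
    have h1 : b 1 ≠ 0 := hb 1 le_rfl
    have h2 : b 2 ≠ 0 := hb 2 one_le_two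
    field_simp [hc]
    simp only [hc, show (1:ℕ) - 1 = 0 from rfl, hB0, zero_sub]
    field_simp
    ring
  | more m ih2 ih1 =>
    rw [Tsum_rec]
    have p2 : ∀ l : ℕ, (∏ k ∈ Icc 1 (l + 1), b (k + 1))
        = (∏ k ∈ Icc 1 l, b (k + 1)) * b (l + 2) := fun l =>
      Finset.prod_Icc_succ_top (by omega) _
    have q2 : ∀ l : ℕ, (∏ k ∈ Icc 1 (l + 1), (b (k + 1) - B k))
        = (∏ k ∈ Icc 1 l, (b (k + 1) - B k)) * (b (l + 2) - B (l + 1)) := fun l =>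
      Finset.prod_Icc_succ_top (by omega) _
    have hbm2 : b (m + 2) ≠ 0 := hb _ (by omega)
    have hbm3 : b (m + 3) ≠ 0 := hb _ (by omega)
    have hcc : c (m + 2) = (B (m + 1) - b (m + 2)) * B (m + 2) / (b (m + 2) * b (m + 3)) := by
      simp only [hc]; norm_num
    have hC : c (m + 2) * (b (m + 2) * b (m + 3)) = (B (m + 1) - b (m + 2)) * B (m + 2) := by
      rw [hcc, div_mul_cancel₀]
      exact mul_ne_zero hbm2 hbm3
    have ih1' : Tsum c (m + 1) * ((∏ k ∈ Icc 1 m, b (k + 1)) * b (m + 2))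
        = (∏ k ∈ Icc 1 m, (b (k + 1) - B k)) * (b (m + 2) - B (m + 1)) := by
      rw [← p2 m, ← q2 m]; exact ih1
    rw [p2 (m + 1), q2 (m + 1), p2 m, q2 m]
    simp only [show m + 1 + 2 = m + 3 from rfl, show m + 1 + 1 = m + 2 from rfl]
    linear_combination b (m + 3) * ih1' + (c (m + 2) * b (m + 2) * b (m + 3)) * ih2
      + (∏ k ∈ Icc 1 m, (b (k + 1) - B k)) * hC

lemma Tsum_eq (c : ℕ → ℂ) (m : ℕ) :
    Tsum c m = ∑ μ ∈ Finset.univ.filter (fun μ : Fin m → Bool => NoTwoAdjOnes μ),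
      ∏ i ∈ Finset.univ.filter (fun i : Fin m => μ i = true), c ((i : ℕ) + 1) := by
  rw [Finset.sum_filter, Tsum]
  exact Fintype.sum_congr _ _ fun μ => by
    by_cases h : NoTwoAdjOnes μ
    · rw [if_pos h, if_pos h, Finset.prod_filter]
    · rw [if_neg h, if_neg h]

/-- "selector": `x` if the `k`-th (1-indexed) entry of `μ` is 1, else `1`. -/
noncomputable def sel {m : ℕ} (μ : Fin m → Bool) (k : ℕ) (x : ℂ) : ℂ :=
  if h : k - 1 < m then (if μ ⟨k - 1, h⟩ then x else 1) else 1

lemma gamma_shift {m : ℕ} (μ : Fin m → Bool) (k : ℕ) (x : ℂ) (hx : x ≠ 0) :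
    Complex.Gamma (x + muC μ k) = sel μ k x * Complex.Gamma x := by
  unfold muC sel
  by_cases h : k - 1 < m
  · rw [dif_pos h, dif_pos h]
    cases hμ : μ ⟨k - 1, h⟩
    · simp
    · simp [Complex.Gamma_add_one x hx]
  · rw [dif_neg h, dif_neg h]; simp

lemma sel_mul {m : ℕ} (μ : Fin m → Bool) (k : ℕ) (x y : ℂ) :
    sel μ k x * sel μ k y = sel μ k (x * y) := by
  unfold sel
  by_cases h : k - 1 < m
  · simp only [dif_pos h]
    cases hμ : μ ⟨k - 1, h⟩ <;> simp [hμ]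
  · simp only [dif_neg h]; simp

lemma sel_congr {m : ℕ} (μ : Fin m → Bool) (k : ℕ) {x y : ℂ} (hxy : x = y) :
    sel μ k x = sel μ k y := by rw [hxy]

lemma prod_Icc_sel {m : ℕ} (μ : Fin m → Bool) (g : ℕ → ℂ) :
    ∏ k ∈ Icc 1 m, sel μ k (g k)
      = ∏ i ∈ Finset.univ.filter (fun i : Fin m => μ i = true), g ((i : ℕ) + 1) := by
  rw [Finset.prod_filter, ← Finset.Ico_add_one_right_eq_Icc, Finset.prod_Ico_eq_prod_range]
  simp only [Nat.succ_sub_one, Nat.add_sub_cancel]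
  rw [← Fin.prod_univ_eq_prod_range (fun i => sel μ (1 + i) (g (1 + i))) m]
  apply Fintype.prod_congr
  intro i
  have h : (1 + (i : ℕ)) - 1 < m := by omega
  rw [sel, dif_pos h]
  have : (⟨(1 + (i : ℕ)) - 1, h⟩ : Fin m) = i := Fin.ext (by simp)
  rw [this, add_comm 1 (i : ℕ)]

/-- reindexing: `∏_{j∈Icc 1 l} F (j+1) = ∏_{k∈Icc 2 (l+1)} F k`. -/
lemma prod_Icc_shift (l : ℕ) (F : ℕ → ℂ) :
    ∏ j ∈ Icc 1 l, F (j + 1) = ∏ k ∈ Icc 2 (l + 1), F k := by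
  rw [show (2 : ℕ) = 1 + 1 from rfl, ← Finset.map_add_right_Icc 1 l 1, Finset.prod_map]
  rfl

theorem pointwise_recurrence (n : ℕ) (hn : 2 ≤ n) (a1 : ℂ) (z s : ℕ → ℂ)
    (hs0 : s 0 = 0) (hsn : s n = 0)
    (hne : ∀ k, 1 ≤ k → k ≤ n → s (k - 1) - s k - a1 ≠ 0)
    (h1 : ∀ N : ℕ, s 1 + a1 ≠ -(N : ℂ))
    (h2 : ∀ N : ℕ, s (n - 1) - a1 ≠ -(N : ℂ))
    (h3 : ∀ j, 1 ≤ j → j ≤ n - 2 → ∀ N : ℕ, z j + s j ≠ -(N : ℂ))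
    (h4 : ∀ j, 1 ≤ j → j ≤ n - 2 → ∀ N : ℕ, z j + s (j + 1) + a1 ≠ -(N : ℂ)) :
    ∑ μ ∈ Finset.univ.filter (fun μ : Fin (n - 1) → Bool => NoTwoAdjOnes μ),
      (∏ i ∈ Finset.univ.filter (fun i : Fin (n - 1) => μ i = true),
          (1 / ((s (i : ℕ) - s ((i : ℕ) + 1) - a1) *
            (s ((i : ℕ) + 1) - s ((i : ℕ) + 2) - a1)))) *
        (Complex.Gamma (s 1 + muC μ 1 + a1) *
          Complex.Gamma (s (n - 1) + muC μ (n - 1) - a1) *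
          ∏ j ∈ Finset.Icc 1 (n - 2),
            (Complex.Gamma (z j + s j + muC μ j) *
              Complex.Gamma (z j + s (j + 1) + muC μ (j + 1) + a1))) = 0 := by
  -- the auxiliary sequences
  set bb : ℕ → ℂ := fun k => if 1 ≤ k ∧ k ≤ n then s (k - 1) - s k - a1 else 1 with hbbdef
  set BB : ℕ → ℂ := fun k => if 1 ≤ k ∧ k ≤ n - 2 then z k + s k
    else if k = n - 1 then s (n - 1) - a1 else 0 with hBBdef
  set cc : ℕ → ℂ := fun k => (BB (k - 1) - bb k) * BB k / (bb k * bb (k + 1)) with hccdef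
  have hbb : ∀ k, 1 ≤ k → bb k ≠ 0 := by
    intro k hk
    by_cases h : 1 ≤ k ∧ k ≤ n
    · simp only [hbbdef, if_pos h]; exact hne k h.1 h.2
    · simp only [hbbdef, if_neg h]; exact one_ne_zero
  have hBB0 : BB 0 = 0 := by
    simp only [hBBdef]
    rw [if_neg (by omega), if_neg (by omega)]
  have hBBend : BB (n - 1) = s (n - 1) - a1 := by
    simp only [hBBdef]
    rw [if_neg (by omega : ¬(1 ≤ n - 1 ∧ n - 1 ≤ n - 2))]
    simp
  have hbbn : bb n = s (n - 1) - a1 := by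
    simp only [hbbdef]
    rw [if_pos ⟨by omega, le_rfl⟩, hsn]
    ring
  -- Gamma arguments are nonzero
  have hx1 : s 1 + a1 ≠ 0 := by simpa using h1 0
  have hx2 : s (n - 1) - a1 ≠ 0 := by simpa using h2 0
  -- the `G0` factor
  set G0 : ℂ := Complex.Gamma (s 1 + a1) * Complex.Gamma (s (n - 1) - a1) *
    ∏ j ∈ Finset.Icc 1 (n - 2),
      (Complex.Gamma (z j + s j) * Complex.Gamma (z j + s (j + 1) + a1)) with hG0def
  have hterm : ∀ μ : Fin (n - 1) → Bool,
      (∏ i ∈ Finset.univ.filter (fun i : Fin (n - 1) => μ i = true),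
          (1 / ((s (i : ℕ) - s ((i : ℕ) + 1) - a1) *
            (s ((i : ℕ) + 1) - s ((i : ℕ) + 2) - a1)))) *
        (Complex.Gamma (s 1 + muC μ 1 + a1) *
          Complex.Gamma (s (n - 1) + muC μ (n - 1) - a1) *
          ∏ j ∈ Finset.Icc 1 (n - 2),
            (Complex.Gamma (z j + s j + muC μ j) *
              Complex.Gamma (z j + s (j + 1) + muC μ (j + 1) + a1)))
      = (∏ i ∈ Finset.univ.filter (fun i : Fin (n - 1) => μ i = true), cc ((i : ℕ) + 1)) * G0 := by
    intro μ
    -- rewrite the Gammas using `sel`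
    rw [show s 1 + muC μ 1 + a1 = s 1 + a1 + muC μ 1 by ring,
      show s (n - 1) + muC μ (n - 1) - a1 = s (n - 1) - a1 + muC μ (n - 1) by ring,
      gamma_shift μ 1 _ hx1, gamma_shift μ (n - 1) _ hx2]
    rw [Finset.prod_congr rfl (fun j hj => ?_ :
      ∀ j ∈ Finset.Icc 1 (n - 2),
        Complex.Gamma (z j + s j + muC μ j) *
            Complex.Gamma (z j + s (j + 1) + muC μ (j + 1) + a1)
          = (sel μ j (z j + s j) * sel μ (j + 1) (z j + s (j + 1) + a1)) *
              (Complex.Gamma (z j + s j) * Complex.Gamma (z j + s (j + 1) + a1)))]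
    · -- regroup the `sel` factors
      rw [Finset.prod_mul_distrib, Finset.prod_mul_distrib]
      -- the key scalar identity
      have hA : sel μ 1 (s 1 + a1)
          * ∏ j ∈ Finset.Icc 1 (n - 2), sel μ (j + 1) (z j + s (j + 1) + a1)
          = ∏ k ∈ Icc 1 (n - 1), sel μ k (BB (k - 1) - bb k) := by
        have e1 : ∀ j ∈ Finset.Icc 1 (n - 2),
            sel μ (j + 1) (z j + s (j + 1) + a1)
              = sel μ (j + 1) (BB (j + 1 - 1) - bb (j + 1)) := by
          intro j hj
          rw [Finset.mem_Icc] at hj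
          apply sel_congr
          simp only [hbbdef, hBBdef, Nat.add_sub_cancel]
          rw [if_pos ⟨hj.1, hj.2⟩, if_pos (⟨by omega, by omega⟩ : 1 ≤ j + 1 ∧ j + 1 ≤ n)]
          ring
        have hAsplit : ∏ k ∈ Icc 1 (n - 1), sel μ k (BB (k - 1) - bb k)
            = sel μ 1 (BB 0 - bb 1)
              * ∏ k ∈ Icc 2 (n - 1), sel μ k (BB (k - 1) - bb k) := by
          rw [← Finset.Ico_add_one_right_eq_Icc, ← Finset.Ico_add_one_right_eq_Icc, show n - 1 + 1 = n by omega,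
            Finset.prod_eq_prod_Ico_succ_bot (by omega :(1:ℕ) < n)]
        rw [Finset.prod_congr rfl e1,
          prod_Icc_shift (n - 2) (fun k => sel μ k (BB (k - 1) - bb k)),
          show n - 2 + 1 = n - 1 by omega, hAsplit]
        congr 1
        apply sel_congr
        rw [hBB0, hbbdef]
        simp only [if_pos (⟨le_rfl, by omega⟩ : 1 ≤ 1 ∧ 1 ≤ n)]
        rw [hs0]
        ring
      have hB : (∏ j ∈ Finset.Icc 1 (n - 2), sel μ j (z j + s j))
          * sel μ (n - 1) (s (n - 1) - a1)
          = ∏ k ∈ Icc 1 (n - 1), sel μ k (BB k) := by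
        have hBsplit : ∏ k ∈ Icc 1 (n - 1), sel μ k (BB k)
            = (∏ k ∈ Icc 1 (n - 2), sel μ k (BB k)) * sel μ (n - 1) (BB (n - 1)) := by
          have h := Finset.prod_Icc_succ_top (a := 1) (b := n - 2)
            (f := fun k => sel μ k (BB k)) (by omega)
          rw [show n - 2 + 1 = n - 1 by omega] at h
          exact h
        rw [hBsplit]
        congr 1
        · apply Finset.prod_congr rfl
          intro j hj
          rw [Finset.mem_Icc] at hj
          apply sel_congr
          simp only [hBBdef]
          rw [if_pos ⟨hj.1, hj.2⟩]
        · exact sel_congr μ (n - 1) hBBend.symm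
      have hAB : (∏ k ∈ Icc 1 (n - 1), sel μ k (BB (k - 1) - bb k))
          * ∏ k ∈ Icc 1 (n - 1), sel μ k (BB k)
          = ∏ i ∈ Finset.univ.filter (fun i : Fin (n - 1) => μ i = true),
              ((BB (i : ℕ) - bb ((i : ℕ) + 1)) * BB ((i : ℕ) + 1)) := by
        rw [← Finset.prod_mul_distrib,
          Finset.prod_congr rfl (fun k _ => sel_mul μ k (BB (k - 1) - bb k) (BB k)),
          prod_Icc_sel μ (fun k => (BB (k - 1) - bb k) * BB k)]
        apply Finset.prod_congr rfl
        intro i _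
        simp only [Nat.add_sub_cancel]
      have hW : (∏ i ∈ Finset.univ.filter (fun i : Fin (n - 1) => μ i = true),
            (1 / ((s (i : ℕ) - s ((i : ℕ) + 1) - a1) *
              (s ((i : ℕ) + 1) - s ((i : ℕ) + 2) - a1))))
          = ∏ i ∈ Finset.univ.filter (fun i : Fin (n - 1) => μ i = true),
              (1 / (bb ((i : ℕ) + 1) * bb ((i : ℕ) + 2))) := by
        apply Finset.prod_congr rfl
        intro i _
        have hi : (i : ℕ) < n - 1 := i.isLt
        simp only [hbbdef]
        rw [if_pos (⟨by omega, by omega⟩ : 1 ≤ (i : ℕ) + 1 ∧ (i : ℕ) + 1 ≤ n),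
          if_pos (⟨by omega, by omega⟩ : 1 ≤ (i : ℕ) + 2 ∧ (i : ℕ) + 2 ≤ n)]
        simp only [Nat.add_sub_cancel, show (i : ℕ) + 2 - 1 = (i : ℕ) + 1 from rfl]
      have hkey : (∏ i ∈ Finset.univ.filter (fun i : Fin (n - 1) => μ i = true),
            (1 / ((s (i : ℕ) - s ((i : ℕ) + 1) - a1) *
              (s ((i : ℕ) + 1) - s ((i : ℕ) + 2) - a1))))
          * ((sel μ 1 (s 1 + a1) * sel μ (n - 1) (s (n - 1) - a1))
            * ((∏ j ∈ Finset.Icc 1 (n - 2), sel μ j (z j + s j))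
              * (∏ j ∈ Finset.Icc 1 (n - 2), sel μ (j + 1) (z j + s (j + 1) + a1))))
          = ∏ i ∈ Finset.univ.filter (fun i : Fin (n - 1) => μ i = true), cc ((i : ℕ) + 1) := by
        rw [hW, show (sel μ 1 (s 1 + a1) * sel μ (n - 1) (s (n - 1) - a1))
            * ((∏ j ∈ Finset.Icc 1 (n - 2), sel μ j (z j + s j))
              * (∏ j ∈ Finset.Icc 1 (n - 2), sel μ (j + 1) (z j + s (j + 1) + a1)))
          = (sel μ 1 (s 1 + a1)
              * ∏ j ∈ Finset.Icc 1 (n - 2), sel μ (j + 1) (z j + s (j + 1) + a1))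
            * ((∏ j ∈ Finset.Icc 1 (n - 2), sel μ j (z j + s j))
              * sel μ (n - 1) (s (n - 1) - a1)) by ring,
          hA, hB, hAB, ← Finset.prod_mul_distrib]
        apply Finset.prod_congr rfl
        intro i _
        simp only [hccdef, Nat.add_sub_cancel, show (i : ℕ) + 1 + 1 = (i : ℕ) + 2 from rfl]
        rw [mul_comm, mul_one_div]
      rw [← hkey, hG0def]
      ring
    · rw [Finset.mem_Icc] at hj
      rw [show z j + s (j + 1) + muC μ (j + 1) + a1 = z j + s (j + 1) + a1 + muC μ (j + 1) by ring,
        gamma_shift μ j _ (by simpa using h3 j hj.1 hj.2 0),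
        gamma_shift μ (j + 1) _ (by simpa using h4 j hj.1 hj.2 0)]
      ring
  rw [Finset.sum_congr rfl (fun μ _ => hterm μ), ← Finset.sum_mul, ← Tsum_eq]
  have halg := alg bb BB hbb hBB0 (n - 1)
  rw [← hccdef] at halg
  have hprodne : (∏ k ∈ Icc 1 (n - 1), bb (k + 1)) ≠ 0 :=
    Finset.prod_ne_zero_iff.mpr (fun k _ => hbb (k + 1) (by omega))
  have hrhs0 : ∏ k ∈ Icc 1 (n - 1), (bb (k + 1) - BB k) = 0 :=
    Finset.prod_eq_zero (Finset.mem_Icc.mpr ⟨by omega, le_rfl⟩)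
      (by rw [show n - 1 + 1 = n by omega, hbbn, hBBend]; ring)
  have hT0 : Tsum cc (n - 1) = 0 := by
    rcases mul_eq_zero.mp (halg.trans hrhs0) with h | h
    · exact h
    · exact absurd h hprodne
  rw [hT0, zero_mul]
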